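/- arXiv:1212.5083 — 4 statements merged into one kernel-verified Lean document; each statement's English description precedes it below -/
import Mathlib

section
/- For integers d and a with 2 ≤ a ≤ d−2, one has (binomial(d,a)−1)(binomial(d,a)−2)/2 ≠ 1 + (1/2)·binomial(d,a)·(a(d−a)−2). Equivalently, the arithmetic genus of a plane curve of degree binomial(d,a) differs from 1 + (1/2)·binomial(d,a)·(a(d−a)−2). -/
open Finset in
lemma choose_ge_mul_add_two (a b : ℕ) (ha : 2 ≤ a) (hb : 2 ≤ b) :
    a * b + 2 ≤ (a + b).choose a := by
  rw [Nat.add_choose_eq]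
  have hsub : ({(a, 0), (a - 1, 1), (a - 2, 2)} : Finset (ℕ × ℕ)) ⊆
      Finset.HasAntidiagonal.antidiagonal a := by
    intro x hx
    simp only [Finset.mem_insert, Finset.mem_singleton] at hx
    rcases hx with rfl | rfl | rfl <;> simp [Finset.HasAntidiagonal.mem_antidiagonal] <;> omega

  calc a * b + 2 ≤ ∑ ij ∈ ({(a, 0), (a - 1, 1), (a - 2, 2)} : Finset (ℕ × ℕ)),
        a.choose ij.1 * b.choose ij.2 := by
        rw [Finset.sum_insert (by simp), Finset.sum_insert (by simp),
          Finset.sum_singleton]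
        have h1 : a.choose (a - 1) = a := by
          have : a - (a - 1) = 1 := by omega
          rw [show a.choose (a-1) = a.choose (a - (a-1)) from
            (Nat.choose_symm (by omega)).symm, this, Nat.choose_one_right]
        have h2 : 1 ≤ a.choose (a - 2) := Nat.choose_pos (by omega)
        have h3 : 1 ≤ b.choose 2 := Nat.choose_pos (by omega)
        simp only [Nat.choose_self, Nat.choose_zero_right, Nat.choose_one_right, h1]
        nlinarith [h2, h3]
    _ ≤ ∑ ij ∈ Finset.HasAntidiagonal.antidiagonal a, a.choose ij.1 * b.choose ij.2 :=
        Finset.sum_le_sum_of_subset hsub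

/-- For integers `d`, `a` with `2 ≤ a ≤ d−2`, the arithmetic genus
`(C−1)(C−2)/2` of a plane curve of degree `C = binomial(d,a)` differs from
`1 + (1/2)·C·(a(d−a)−2)`. -/
theorem stmt_5 (d a : ℕ) (ha : 2 ≤ a) (had : a + 2 ≤ d) :
    ((Nat.choose d a : ℚ) - 1) * ((Nat.choose d a : ℚ) - 2) / 2
      ≠ 1 + (Nat.choose d a : ℚ) * ((a : ℚ) * ((d : ℚ) - (a : ℚ)) - 2) / 2 := by
  intro h
  set b := d - a with hb
  have hd : d = a + b := by omega
  have hb2 : 2 ≤ b := by omega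
  have key : a * b + 2 ≤ d.choose a := by
    rw [hd]; exact choose_ge_mul_add_two a b ha hb2
  have keyQ : (a : ℚ) * b + 2 ≤ (d.choose a : ℚ) := by exact_mod_cast key
  have hdQ : (d : ℚ) - a = b := by rw [hd]; push_cast; ring
  rw [hdQ] at h
  set C : ℚ := (d.choose a : ℚ)
  have : C * (C - 1 - a * b) = 0 := by field_simp at h; nlinarith [h]
  have hC : (2 : ℚ) ≤ C := by nlinarith
  nlinarith [this, keyQ, hC]
end

section
/- Let Π: H → ℙ^m be the finite flat morphism of degree binomial(d,a) from the relative Hilbert scheme H = Hilb^[a](A/ℙ^m) of a general projection p_z: A → ℙ^m of a smooth degree-d hypersurface A ⊂ ℙ^{m+1}. Let [ℓ] ∈ ℙ^m with ℓ ∩ A = h₁p₁+...+h_rp_r and [W] ∈ Π^{-1}([ℓ]) with W = k₁p₁+...+k_rp_r, 0 ≤ k_i ≤ h_i and Σk_i = a. Then the tangent space of the fiber Π^{-1}([ℓ]) at [W] has dimension Σ_{i=1}^r min(k_i, h_i − k_i). -/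
open Polynomial

set_option synthInstance.maxHeartbeats 1000000
set_option maxHeartbeats 1000000

noncomputable section

/-- The coordinate ring of the fiber `ℓ ∩ A = h₁p₁ + ⋯ + h_rp_r`, namely
`O_{ℓ∩A} = ∏ᵢ ℂ[t]/(t^{hᵢ})`. -/
abbrev FiberRing (r : ℕ) (h : Fin r → ℕ) : Type :=
  ∀ i : Fin r, Polynomial ℂ ⧸ (Ideal.span {(X : Polynomial ℂ) ^ (h i)})

/-- The ideal of the subscheme `W = k₁p₁ + ⋯ + k_rp_r` of `ℓ ∩ A`, generated by the
element whose `i`-th component is `t^{kᵢ}`. -/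
abbrev WIdeal (r : ℕ) (h k : Fin r → ℕ) : Ideal (FiberRing r h) :=
  Ideal.span
    {fun i => Ideal.Quotient.mk (Ideal.span {(X : Polynomial ℂ) ^ (h i)}) (X ^ (k i))}

namespace Stmt11Aux

/-! ### Component lemmas: the ring `ℂ[X]/(X^n)` -/

lemma finrank_comp (n : ℕ) :
    Module.finrank ℂ (Polynomial ℂ ⧸ (Ideal.span {(X : Polynomial ℂ) ^ n})) = n := by
  have h := (AdjoinRoot.powerBasis' (monic_X_pow (R := ℂ) (n := n))).finrank
  simp [natDegree_X_pow] at h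
  exact h

instance fdcomp (n : ℕ) :
    Module.Finite ℂ (Polynomial ℂ ⧸ (Ideal.span {(X : Polynomial ℂ) ^ n})) :=
  Module.Finite.of_basis (AdjoinRoot.powerBasis' (monic_X_pow (R := ℂ) (n := n))).basis

/-- The annihilator of `X^b` in `ℂ[X]/(X^n)` is generated by `X^(n-b)`. -/
lemma ann_pow {n b : ℕ} (hb : b ≤ n) (c : Polynomial ℂ ⧸ (Ideal.span {(X : Polynomial ℂ) ^ n}))
    (hc : c * Ideal.Quotient.mk _ (X ^ b) = 0) :
    ∃ s, c = s * Ideal.Quotient.mk _ ((X : Polynomial ℂ) ^ (n - b)) := by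
  obtain ⟨p, rfl⟩ := Ideal.Quotient.mk_surjective c
  rw [← map_mul, Ideal.Quotient.eq_zero_iff_mem, Ideal.mem_span_singleton] at hc
  obtain ⟨q, hq⟩ := hc
  have hx : (X : Polynomial ℂ) ^ n = X ^ (n - b) * X ^ b := by
    rw [← pow_add, Nat.sub_add_cancel hb]
  rw [hx, mul_assoc] at hq
  have hp : p = X ^ (n - b) * q := by
    have hXb : ((X : Polynomial ℂ) ^ b) ≠ 0 := pow_ne_zero _ X_ne_zero
    exact mul_right_cancel₀ hXb (by linear_combination hq)
  exact ⟨Ideal.Quotient.mk _ q, by rw [hp, map_mul, mul_comm]⟩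

/-- The ideal `(X^b)` of `ℂ[X]/(X^n)` has dimension `n - b` over `ℂ`. -/
lemma finrank_span_pow {n b : ℕ} (hb : b ≤ n) :
    Module.finrank ℂ
      ((Ideal.span {Ideal.Quotient.mk (Ideal.span {(X : Polynomial ℂ) ^ n}) (X ^ b)} :
          Ideal (Polynomial ℂ ⧸ (Ideal.span {(X : Polynomial ℂ) ^ n}))).restrictScalars ℂ)
      = n - b := by
  set I : Ideal (Polynomial ℂ) := Ideal.span {(X : Polynomial ℂ) ^ n} with hI
  set J : Ideal (Polynomial ℂ) := Ideal.span {(X : Polynomial ℂ) ^ b} with hJ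
  have hIJ : I ≤ J := by
    rw [hI, hJ]
    exact Ideal.span_singleton_le_span_singleton.mpr (pow_dvd_pow _ hb)
  set Jbar : Ideal (Polynomial ℂ ⧸ I) := Ideal.span {Ideal.Quotient.mk I (X ^ b)} with hJbar
  have hmap : J.map (Ideal.Quotient.mkₐ ℂ I) = Jbar := by
    rw [hJ, Ideal.map_span, Set.image_singleton, hJbar, Ideal.Quotient.mkₐ_eq_mk]
  have e1 : ((Polynomial ℂ ⧸ I) ⧸ Jbar) ≃ₗ[ℂ] (Polynomial ℂ ⧸ J) := by
    rw [← hmap]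
    exact (DoubleQuot.quotQuotEquivQuotOfLEₐ ℂ hIJ).toLinearEquiv
  have e2 : ((Polynomial ℂ ⧸ I) ⧸ (Jbar.restrictScalars ℂ)) ≃ₗ[ℂ] ((Polynomial ℂ ⧸ I) ⧸ Jbar) :=
    Submodule.Quotient.restrictScalarsEquiv ℂ Jbar
  have hq : Module.finrank ℂ ((Polynomial ℂ ⧸ I) ⧸ (Jbar.restrictScalars ℂ)) = b := by
    rw [e2.finrank_eq, e1.finrank_eq, finrank_comp]
  have htot := Submodule.finrank_quotient_add_finrank (Jbar.restrictScalars ℂ)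
  rw [hq, finrank_comp] at htot
  omega

/-! ### Products of submodules of a pi type -/

def piSubEquiv {ι : Type*} [Fintype ι] {R : Type*} [Semiring R] {φ : ι → Type*}
    [∀ i, AddCommMonoid (φ i)] [∀ i, Module R (φ i)] (p : ∀ i, Submodule R (φ i)) :
    (Submodule.pi Set.univ p) ≃ₗ[R] (∀ i, p i) where
  toFun x := fun i => ⟨x.1 i, x.2 i (Set.mem_univ i)⟩
  map_add' _ _ := rfl
  map_smul' _ _ := rfl
  invFun y := ⟨fun i => (y i).1, fun i _ => (y i).2⟩
  left_inv _ := rfl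
  right_inv _ := rfl

lemma finrank_piSub {ι : Type*} [Fintype ι] {φ : ι → Type*}
    [∀ i, AddCommGroup (φ i)] [∀ i, Module ℂ (φ i)] [∀ i, FiniteDimensional ℂ (φ i)]
    (p : ∀ i, Submodule ℂ (φ i)) :
    Module.finrank ℂ (Submodule.pi Set.univ p) = ∑ i, Module.finrank ℂ (p i) := by
  rw [(piSubEquiv p).finrank_eq, Module.finrank_pi_fintype]

lemma span_pi_eq (r : ℕ) (h m : Fin r → ℕ) :
    ((Ideal.span
        {fun i => Ideal.Quotient.mk (Ideal.span {(X : Polynomial ℂ) ^ (h i)}) (X ^ (m i))} :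
        Ideal (FiberRing r h)).restrictScalars ℂ)
      = Submodule.pi Set.univ
          (fun i =>
            (Ideal.span {Ideal.Quotient.mk (Ideal.span {(X : Polynomial ℂ) ^ (h i)}) (X ^ (m i))} :
              Ideal (Polynomial ℂ ⧸ (Ideal.span {(X : Polynomial ℂ) ^ (h i)}))).restrictScalars ℂ) := by
  ext x
  simp only [Submodule.restrictScalars_mem, Submodule.mem_pi, Set.mem_univ, forall_true_left]
  constructor
  · intro hx i
    obtain ⟨c, rfl⟩ := Ideal.mem_span_singleton'.mp hx
    exact Ideal.mem_span_singleton'.mpr ⟨c i, rfl⟩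
  · intro hx
    choose c hc using fun i => Ideal.mem_span_singleton'.mp (hx i)
    exact Ideal.mem_span_singleton'.mpr ⟨c, funext hc⟩

lemma finrank_span_pi (r : ℕ) (h m : Fin r → ℕ) (hm : ∀ i, m i ≤ h i) :
    Module.finrank ℂ
      ((Ideal.span
          {fun i => Ideal.Quotient.mk (Ideal.span {(X : Polynomial ℂ) ^ (h i)}) (X ^ (m i))} :
          Ideal (FiberRing r h)).restrictScalars ℂ) = ∑ i, (h i - m i) := by
  rw [span_pi_eq, finrank_piSub]
  exact Finset.sum_congr rfl fun i _ => finrank_span_pow (hm i)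

/-! ### Hom out of a principal ideal -/

section HomLemma
variable {R : Type*} [CommRing R] [Algebra ℂ R]
variable {M : Type*} [AddCommGroup M] [Module R M] [Module ℂ M] [IsScalarTower ℂ R M]

lemma finrank_hom_span_singleton (e f : R) (hef : f * e = 0)
    (hann : ∀ c : R, c * e = 0 → ∃ s : R, c = s * f) :
    Module.finrank ℂ ((Ideal.span {e} : Ideal R) →ₗ[R] M) =
      Module.finrank ℂ (LinearMap.ker ((LinearMap.lsmul R M f).restrictScalars ℂ)) := by
  have he : e ∈ (Ideal.span {e} : Ideal R) := Ideal.subset_span rfl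
  set ev : ((Ideal.span {e} : Ideal R) →ₗ[R] M) →ₗ[ℂ] M :=
    { toFun := fun φ => φ ⟨e, he⟩
      map_add' := fun φ ψ => rfl
      map_smul' := fun c φ => rfl } with hev
  have hinj : Function.Injective ev := by
    intro φ ψ hφψ
    ext ⟨x, hx⟩
    obtain ⟨c, rfl⟩ := Ideal.mem_span_singleton'.mp hx
    have hsm : (⟨c * e, hx⟩ : (Ideal.span {e} : Ideal R)) = c • ⟨e, he⟩ :=
      Subtype.ext (smul_eq_mul c e).symm
    rw [hsm, map_smul, map_smul]
    exact congrArg (c • ·) hφψ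
  have hrange : LinearMap.range ev
      = LinearMap.ker ((LinearMap.lsmul R M f).restrictScalars ℂ) := by
    ext y
    simp only [LinearMap.mem_range, LinearMap.mem_ker, LinearMap.restrictScalars_apply,
      LinearMap.lsmul_apply]
    constructor
    · rintro ⟨φ, rfl⟩
      have h0 : (f • (⟨e, he⟩ : (Ideal.span {e} : Ideal R))) = 0 :=
        Subtype.ext (by simp [smul_eq_mul, hef])
      rw [hev]
      simp only [LinearMap.coe_mk, AddHom.coe_mk]
      rw [← map_smul, h0, map_zero]
    · intro hy
      set T : R →ₗ[R] R := LinearMap.toSpanSingleton R R e with hT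
      have hspan : (Ideal.span {e} : Submodule R R) = LinearMap.range T := by
        rw [← Ideal.submodule_span_eq, LinearMap.span_singleton_eq_range]
      have hker : LinearMap.ker T ≤ LinearMap.ker (LinearMap.toSpanSingleton R M y) := by
        intro c hc
        have hc' : c * e = 0 := by
          simpa [hT, LinearMap.toSpanSingleton_apply, smul_eq_mul] using hc
        obtain ⟨s, rfl⟩ := hann c hc'
        simp only [LinearMap.mem_ker, LinearMap.toSpanSingleton_apply]
        rw [mul_smul, hy, smul_zero]
      set ψ : (R ⧸ LinearMap.ker T) →ₗ[R] M :=
        Submodule.liftQ (LinearMap.ker T) (LinearMap.toSpanSingleton R M y) hker with hψ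
      set eqv : (Ideal.span {e} : Ideal R) ≃ₗ[R] R ⧸ LinearMap.ker T :=
        (LinearEquiv.ofEq _ _ hspan).trans (LinearMap.quotKerEquivRange T).symm with heqv
      refine ⟨ψ.comp eqv.toLinearMap, ?_⟩
      rw [hev]
      simp only [LinearMap.coe_mk, AddHom.coe_mk, LinearMap.comp_apply, LinearEquiv.coe_coe]
      have h1 : eqv ⟨e, he⟩ = Submodule.Quotient.mk (1 : R) := by
        rw [heqv]
        simp only [LinearEquiv.trans_apply]
        rw [LinearEquiv.symm_apply_eq]
        apply Subtype.ext
        show e = T 1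
        rw [hT]
        simp [LinearMap.toSpanSingleton_apply]
      rw [h1, hψ]
      erw [Submodule.liftQ_apply]
      simp [LinearMap.toSpanSingleton_apply]
  rw [(LinearEquiv.ofInjective ev hinj).finrank_eq, hrange]

end HomLemma

/-! ### Dimension of the kernel of multiplication by `f` on `R/(e)` -/

section KerLemma
variable {R : Type*} [CommRing R] [Algebra ℂ R] [FiniteDimensional ℂ R]

lemma finrank_ker_lsmul (e f : R) :
    Module.finrank ℂ
        (LinearMap.ker ((LinearMap.lsmul R (R ⧸ Ideal.span {e}) f).restrictScalars ℂ))
      + Module.finrank ℂ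
          (((Ideal.span {e}).restrictScalars ℂ ⊔ (Ideal.span {f}).restrictScalars ℂ :
            Submodule ℂ R))
      = Module.finrank ℂ R := by
  set I : Ideal R := Ideal.span {e} with hI
  set I' : Submodule ℂ R := I.restrictScalars ℂ with hI'
  set p : Submodule ℂ R := (Ideal.span {f}).restrictScalars ℂ with hp
  set q : R →ₗ[ℂ] (R ⧸ I) := (Ideal.Quotient.mkₐ ℂ I).toLinearMap with hq
  have hqsurj : Function.Surjective q := Ideal.Quotient.mk_surjective
  haveI : Module.Finite ℂ (R ⧸ I) := Module.Finite.of_surjective q hqsurj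
  set L := (LinearMap.lsmul R (R ⧸ I) f).restrictScalars ℂ with hL
  have hrangeL : LinearMap.range L = Submodule.map q p := by
    ext y
    simp only [LinearMap.mem_range, Submodule.mem_map, hL, LinearMap.restrictScalars_apply,
      LinearMap.lsmul_apply]
    constructor
    · rintro ⟨x, rfl⟩
      obtain ⟨r, rfl⟩ := hqsurj x
      refine ⟨f * r, ?_, ?_⟩
      · rw [hp]
        exact Ideal.mem_span_singleton'.mpr ⟨r, mul_comm r f⟩
      · show q (f * r) = f • q r
        rw [hq]
        simp only [AlgHom.toLinearMap_apply, Ideal.Quotient.mkₐ_eq_mk]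
        rw [← smul_eq_mul]
        exact Submodule.Quotient.mk_smul I f r
    · rintro ⟨x, hx, rfl⟩
      obtain ⟨c, rfl⟩ := Ideal.mem_span_singleton'.mp hx
      refine ⟨q c, ?_⟩
      show f • q c = q (c * f)
      rw [hq]
      simp only [AlgHom.toLinearMap_apply, Ideal.Quotient.mkₐ_eq_mk]
      rw [mul_comm, ← smul_eq_mul]
      exact (Submodule.Quotient.mk_smul I f c).symm
  have hkerq : LinearMap.ker q = I' := by
    ext x
    simp [hq, hI', Ideal.Quotient.eq_zero_iff_mem]
  set Φ := q.comp p.subtype with hΦ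
  have hrangeΦ : LinearMap.range Φ = Submodule.map q p := by
    rw [hΦ, LinearMap.range_comp, Submodule.range_subtype]
  have hkerΦ : LinearMap.ker Φ = Submodule.comap p.subtype (p ⊓ I') := by
    rw [hΦ, LinearMap.ker_comp, hkerq, Submodule.comap_inf, Submodule.comap_subtype_self]
    rw [top_inf_eq]
  have e2 : (LinearMap.ker Φ) ≃ₗ[ℂ] (p ⊓ I' : Submodule ℂ R) := by
    rw [hkerΦ]
    exact Submodule.comapSubtypeEquivOfLe inf_le_left
  have rn1 := LinearMap.finrank_range_add_finrank_ker Φ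
  rw [hrangeΦ, e2.finrank_eq] at rn1
  have rn2 := LinearMap.finrank_range_add_finrank_ker L
  rw [hrangeL] at rn2
  have hquot : Module.finrank ℂ (R ⧸ I) + Module.finrank ℂ I' = Module.finrank ℂ R := by
    have h1 := Submodule.finrank_quotient_add_finrank I'
    rwa [(Submodule.Quotient.restrictScalarsEquiv ℂ I).finrank_eq] at h1
  have hsupinf := Submodule.finrank_sup_add_finrank_inf_eq p I'
  rw [sup_comm p I'] at hsupinf
  omega

end KerLemma

end Stmt11Aux

open Stmt11Aux in
/-- Tangent space to the fiber of `Π : Hilb^[a](A/ℙ^m) → ℙ^m` at `[W]`: if the fiber of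
the projection is `ℓ ∩ A = h₁p₁ + ⋯ + h_rp_r` (with `∑ hᵢ = d`) and
`W = k₁p₁ + ⋯ + k_rp_r ⊆ ℓ ∩ A` has length `a = ∑ kᵢ`, then the tangent space of
`Π⁻¹([ℓ]) = Hilb^[a](ℓ ∩ A)` at `[W]`, namely `Hom_{O_{ℓ∩A}}(I_W, O_W)`, has
dimension `∑ᵢ min(kᵢ, hᵢ − kᵢ)`. -/
theorem stmt_11 (m d a r : ℕ) (h k : Fin r → ℕ)
    (hh : ∀ i, 1 ≤ h i) (hk : ∀ i, k i ≤ h i)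
    (hd : ∑ i, h i = d) (ha : ∑ i, k i = a) (ha1 : 1 ≤ a) (had : a ≤ d)
    (hm : 1 ≤ m) :
    Module.finrank ℂ
        ((WIdeal r h k) →ₗ[FiberRing r h] (FiberRing r h ⧸ WIdeal r h k)) =
      ∑ i, min (k i) (h i - k i) := by
  classical
  have hminh : ∀ i, min (k i) (h i - k i) ≤ h i :=
    fun i => le_trans (min_le_left _ _) (hk i)
  set e : FiberRing r h :=
    fun i => Ideal.Quotient.mk (Ideal.span {(X : Polynomial ℂ) ^ (h i)}) (X ^ (k i)) with he
  set f : FiberRing r h :=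
    fun i => Ideal.Quotient.mk (Ideal.span {(X : Polynomial ℂ) ^ (h i)}) (X ^ (h i - k i)) with hf
  set g : FiberRing r h :=
    fun i => Ideal.Quotient.mk (Ideal.span {(X : Polynomial ℂ) ^ (h i)})
      (X ^ (min (k i) (h i - k i))) with hg
  have hef : f * e = 0 := by
    funext i
    show f i * e i = 0
    rw [hf, he]
    simp only []
    rw [← map_mul, ← pow_add, Nat.sub_add_cancel (hk i), Ideal.Quotient.eq_zero_iff_mem]
    exact Ideal.subset_span rfl
  have hann : ∀ c : FiberRing r h, c * e = 0 → ∃ s, c = s * f := by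
    intro c hc
    have hci : ∀ i, c i * Ideal.Quotient.mk _ ((X : Polynomial ℂ) ^ (k i)) = 0 :=
      fun i => congrFun hc i
    choose s hs using fun i => ann_pow (hk i) (c i) (hci i)
    exact ⟨s, funext hs⟩
  have hWe : WIdeal r h k = Ideal.span {e} := rfl
  rw [hWe, finrank_hom_span_singleton e f hef hann]
  -- now compute the dimension of the kernel of multiplication by `f`
  have hker := finrank_ker_lsmul (R := FiberRing r h) e f
  have hfrR : Module.finrank ℂ (FiberRing r h) = ∑ i, h i := by
    rw [Module.finrank_pi_fintype]
    exact Finset.sum_congr rfl fun i _ => finrank_comp (h i)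
  -- identify the sup with the ideal generated by `g`
  have hge : e ∈ Ideal.span {g} := by
    refine Ideal.mem_span_singleton.mpr ?_
    refine ⟨fun i => Ideal.Quotient.mk _ ((X : Polynomial ℂ) ^ (k i - min (k i) (h i - k i))),
      funext fun i => ?_⟩
    show e i = g i * _
    rw [he, hg]
    simp only []
    rw [← map_mul, ← pow_add, Nat.add_sub_cancel' (min_le_left _ _)]
  have hgf : f ∈ Ideal.span {g} := by
    refine Ideal.mem_span_singleton.mpr ?_
    refine ⟨fun i =>
      Ideal.Quotient.mk _ ((X : Polynomial ℂ) ^ ((h i - k i) - min (k i) (h i - k i))),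
      funext fun i => ?_⟩
    show f i = g i * _
    rw [hf, hg]
    simp only []
    rw [← map_mul, ← pow_add, Nat.add_sub_cancel' (min_le_right _ _)]
  have hsup : ((Ideal.span {e}).restrictScalars ℂ ⊔ (Ideal.span {f}).restrictScalars ℂ :
      Submodule ℂ (FiberRing r h)) = (Ideal.span {g}).restrictScalars ℂ := by
    apply le_antisymm
    · apply sup_le
      · intro x hx
        exact Ideal.span_singleton_le_span_singleton.mpr
          (Ideal.mem_span_singleton.mp hge) hx
      · intro x hx
        exact Ideal.span_singleton_le_span_singleton.mpr
          (Ideal.mem_span_singleton.mp hgf) hx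
    · intro x hx
      obtain ⟨c, rfl⟩ := Ideal.mem_span_singleton'.mp hx
      set u : FiberRing r h := fun i => if k i ≤ h i - k i then 1 else 0 with hu
      set v : FiberRing r h := fun i => if k i ≤ h i - k i then 0 else 1 with hv
      have hdecomp : c * g = (c * u) * e + (c * v) * f := by
        funext i
        show c i * g i = (c i * u i) * e i + (c i * v i) * f i
        rw [hg, he, hf, hu, hv]
        simp only []
        by_cases hi : k i ≤ h i - k i
        · rw [if_pos hi, if_pos hi, min_eq_left hi]
          ring
        · rw [if_neg hi, if_neg hi, min_eq_right (le_of_not_ge hi)]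
          ring
      rw [hdecomp]
      refine Submodule.mem_sup.mpr ⟨(c * u) * e, ?_, (c * v) * f, ?_, rfl⟩
      · exact Ideal.mem_span_singleton'.mpr ⟨c * u, rfl⟩
      · exact Ideal.mem_span_singleton'.mpr ⟨c * v, rfl⟩
  have hsupr : Module.finrank ℂ
      (((Ideal.span {e}).restrictScalars ℂ ⊔ (Ideal.span {f}).restrictScalars ℂ :
        Submodule ℂ (FiberRing r h)))
      = ∑ i, (h i - min (k i) (h i - k i)) := by
    rw [hsup]
    exact finrank_span_pi r h (fun i => min (k i) (h i - k i)) hminh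
  rw [hfrR, hsupr] at hker
  have hsum : ∑ i, (h i - min (k i) (h i - k i)) + ∑ i, min (k i) (h i - k i) = ∑ i, h i := by
    rw [← Finset.sum_add_distrib]
    exact Finset.sum_congr rfl fun i _ => Nat.sub_add_cancel (hminh i)
  omega

end
end

section
/- With notation as above (Π: Hilb^[a](A/ℙ^m) → ℙ^m for the projection of a smooth hypersurface from a general point), Π is smooth at [W] if and only if W is a union of irreducible components of ℓ ∩ A, equivalently min(k_i, h_i − k_i) = 0 for all i, equivalently for each i either k_i = 0 or k_i = h_i. -/
open Polynomial

set_option synthInstance.maxHeartbeats 1000000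
set_option maxHeartbeats 1000000

noncomputable section

namespace Stmt12Aux

variable (r : ℕ) (h k : Fin r → ℕ)

/-- The generator of `WIdeal`. -/
def gen : FiberRing r h :=
  fun i => Ideal.Quotient.mk (Ideal.span {(X : Polynomial ℂ) ^ (h i)}) (X ^ (k i))

lemma wideal_eq : WIdeal r h k = Ideal.span {gen r h k} := rfl

lemma mem_wideal_iff {y : FiberRing r h} : y ∈ WIdeal r h k ↔ gen r h k ∣ y := by
  rw [wideal_eq, Ideal.mem_span_singleton]

lemma gen_mem : gen r h k ∈ WIdeal r h k := by
  rw [wideal_eq]; exact Ideal.subset_span rfl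

/-- Easy direction: if each `kᵢ` is `0` or `hᵢ`, the generator is idempotent and the
Hom module vanishes. -/
lemma subsingleton_of (hcond : ∀ i, k i = 0 ∨ k i = h i) :
    Subsingleton ((WIdeal r h k) →ₗ[FiberRing r h] (FiberRing r h ⧸ WIdeal r h k)) := by
  have hid : gen r h k * gen r h k = gen r h k := by
    funext i
    simp only [Pi.mul_apply, gen]
    rcases hcond i with h0 | h0
    · simp [h0]
    · have hz : Ideal.Quotient.mk (Ideal.span {(X : Polynomial ℂ) ^ (h i)})
          ((X : Polynomial ℂ) ^ (k i)) = 0 := by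
        rw [h0]
        exact Ideal.Quotient.eq_zero_iff_mem.mpr (Ideal.subset_span rfl)
      rw [hz, zero_mul]
  set g := gen r h k with hg
  have hgmem : g ∈ WIdeal r h k := gen_mem r h k
  have H : ∀ φ : (WIdeal r h k) →ₗ[FiberRing r h] (FiberRing r h ⧸ WIdeal r h k),
      φ = 0 := by
    intro φ
    -- first: φ of the generator is zero
    have hφg : φ ⟨g, hgmem⟩ = 0 := by
      have hge : (⟨g, hgmem⟩ : WIdeal r h k) = g • (⟨g, hgmem⟩ : WIdeal r h k) :=
        Subtype.ext (by simpa [smul_eq_mul] using hid.symm)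
      rw [hge, map_smul]
      obtain ⟨z, hz⟩ := Submodule.Quotient.mk_surjective _ (φ ⟨g, hgmem⟩)
      rw [← hz, ← Submodule.Quotient.mk_smul, Submodule.Quotient.mk_eq_zero]
      simpa [smul_eq_mul] using Ideal.mul_mem_right z _ hgmem
    ext ⟨y, hy⟩
    obtain ⟨c, hc⟩ := (mem_wideal_iff r h k).mp hy
    have hyc : (⟨y, hy⟩ : WIdeal r h k) = c • (⟨g, hgmem⟩ : WIdeal r h k) :=
      Subtype.ext (by simp [smul_eq_mul, hc, mul_comm, hg])
    rw [hyc, map_smul, hφg, smul_zero]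
    simp
  exact ⟨fun a b => by rw [H a, H b]⟩

/-- Hard direction: if `0 < kᵢ < hᵢ` for some `i`, there is a nonzero homomorphism. -/
lemma not_subsingleton_of (i₀ : Fin r) (h1 : 1 ≤ k i₀) (h2 : k i₀ < h i₀) :
    ¬ Subsingleton ((WIdeal r h k) →ₗ[FiberRing r h] (FiberRing r h ⧸ WIdeal r h k)) := by
  intro hsub
  set R := FiberRing r h
  set I := WIdeal r h k
  set g := gen r h k with hgdef
  have hgmem : g ∈ I := gen_mem r h k
  set gel : I := ⟨g, hgmem⟩ with hgel
  -- the element x = X^(k i₀ - 1) in the i₀ component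
  set x : R := Pi.single i₀
    (Ideal.Quotient.mk (Ideal.span {(X : Polynomial ℂ) ^ (h i₀)}) (X ^ (k i₀ - 1)))
    with hxdef
  -- the surjection π : R → I, r ↦ r • gel
  set π : R →ₗ[R] I := LinearMap.toSpanSingleton R I gel with hπ
  have hπ_surj : Function.Surjective π := by
    rintro ⟨y, hy⟩
    obtain ⟨c, hc⟩ := (mem_wideal_iff r h k).mp hy
    exact ⟨c, Subtype.ext (by simp [hπ, LinearMap.toSpanSingleton_apply, hgel,
      smul_eq_mul, hc, mul_comm, hgdef])⟩
  -- the map ψ : R → R/I, r ↦ r • (mk x)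
  set ψ : R →ₗ[R] (R ⧸ (I : Submodule R R)) :=
    LinearMap.toSpanSingleton R _ (Submodule.Quotient.mk x) with hψ
  have hle : LinearMap.ker π ≤ LinearMap.ker ψ := by
    intro c hcker
    have hcg : c * g = 0 := by
      have : π c = 0 := hcker
      have := congrArg Subtype.val this
      simpa [hπ, LinearMap.toSpanSingleton_apply, hgel, smul_eq_mul] using this
    -- so c_{i₀} * X^{k} = 0 in ℂ[X]/(X^h)
    rw [LinearMap.mem_ker, hψ, LinearMap.toSpanSingleton_apply,
      ← Submodule.Quotient.mk_smul, Submodule.Quotient.mk_eq_zero]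
    rw [mem_wideal_iff]
    -- get polynomial lift of c i₀
    obtain ⟨p, hp⟩ := Ideal.Quotient.mk_surjective (c i₀)
    have hcomp : Ideal.Quotient.mk (Ideal.span {(X : Polynomial ℂ) ^ (h i₀)})
        (p * X ^ (k i₀)) = 0 := by
      have := congrFun hcg i₀
      simp only [Pi.mul_apply, Pi.zero_apply, hgdef, gen] at this
      rw [map_mul, hp]
      exact this
    rw [Ideal.Quotient.eq_zero_iff_mem, Ideal.mem_span_singleton] at hcomp
    obtain ⟨t, ht⟩ := hcomp
    -- p = X^(h-k) * t
    have hpt : p = X ^ (h i₀ - k i₀) * t := by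
      have hXk : (X : Polynomial ℂ) ^ (k i₀) ≠ 0 := pow_ne_zero _ X_ne_zero
      apply mul_right_cancel₀ hXk
      rw [ht, mul_right_comm, ← pow_add]
      congr 2
      omega
    refine ⟨Pi.single i₀ (Ideal.Quotient.mk (Ideal.span {(X : Polynomial ℂ) ^ (h i₀)})
      (X ^ (h i₀ - 1 - k i₀) * t)), ?_⟩
    rw [smul_eq_mul, hxdef]
    funext j
    rw [Pi.mul_apply, Pi.mul_apply]
    by_cases hj : j = i₀
    · subst hj
      rw [Pi.single_eq_same, Pi.single_eq_same]
      show c j * _ = Ideal.Quotient.mk _ ((X : Polynomial ℂ) ^ (k j)) * _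
      have e1 : (h j - k j) + (k j - 1) = (k j) + (h j - 1 - k j) := by omega
      rw [← hp, ← map_mul, ← map_mul, hpt, mul_right_comm, ← pow_add, e1, pow_add,
        mul_assoc]
    · rw [Pi.single_eq_of_ne hj, Pi.single_eq_of_ne hj, mul_zero, mul_zero]
  -- lift to a map I → R/I
  set e := LinearMap.quotKerEquivOfSurjective (R := R) (M := R) (M₂ := I) π hπ_surj with he
  set Φ : (R ⧸ LinearMap.ker π) →ₗ[R] (R ⧸ (I : Submodule R R)) :=
    Submodule.liftQ (LinearMap.ker π) ψ hle with hΦ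
  have hzero : Φ (Submodule.Quotient.mk 1) = 0 := by
    have hall := Subsingleton.elim (Φ ∘ₗ e.symm.toLinearMap)
      (0 : (WIdeal r h k) →ₗ[FiberRing r h] (FiberRing r h ⧸ WIdeal r h k))
    calc Φ (Submodule.Quotient.mk 1)
        = (Φ ∘ₗ e.symm.toLinearMap) (e (Submodule.Quotient.mk 1)) := by
          simp
      _ = 0 := by rw [hall]; rfl
  have hx0 : Submodule.Quotient.mk x = (0 : R ⧸ (I : Submodule R R)) := by
    have : Φ (Submodule.Quotient.mk 1) = ψ 1 := by
      rw [hΦ, Submodule.liftQ_apply]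
    rw [this] at hzero
    simpa [hψ, LinearMap.toSpanSingleton_apply] using hzero
  rw [Submodule.Quotient.mk_eq_zero] at hx0
  obtain ⟨c, hc⟩ := (mem_wideal_iff r h k).mp hx0
  -- look at component i₀
  have hcomp := congrFun hc i₀
  simp only [hxdef, Pi.single_eq_same, Pi.mul_apply, hgdef, gen] at hcomp
  obtain ⟨q, hq⟩ := Ideal.Quotient.mk_surjective (c i₀)
  rw [← hq, ← map_mul, Ideal.Quotient.eq, Ideal.mem_span_singleton] at hcomp
  obtain ⟨s, hs⟩ := hcomp
  -- X^(k-1) = X^k * q + X^h * s, so X^k ∣ X^(k-1), contradiction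
  have hdvd : (X : Polynomial ℂ) ^ (k i₀) ∣ X ^ (k i₀ - 1) := by
    have : (X : Polynomial ℂ) ^ (k i₀ - 1) = X ^ (k i₀) * (q + X ^ (h i₀ - k i₀) * s) := by
      have hsplit : (X : Polynomial ℂ) ^ (h i₀) = X ^ (k i₀) * X ^ (h i₀ - k i₀) := by
        rw [← pow_add]; congr 1; omega
      have := sub_eq_iff_eq_add.mp hs
      rw [this, hsplit]; ring
    exact ⟨_, this⟩
  have := Polynomial.X_pow_dvd_iff.mp hdvd (k i₀ - 1) (by omega)
  rw [Polynomial.coeff_X_pow] at this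
  simp at this

end Stmt12Aux

/-- Smoothness criterion for `Π : Hilb^[a](A/ℙ^m) → ℙ^m` at `[W]`: with
`ℓ ∩ A = h₁p₁ + ⋯ + h_rp_r` and `W = k₁p₁ + ⋯ + k_rp_r` (`0 ≤ kᵢ ≤ hᵢ`), since `Π` is a
finite flat morphism between `m`-dimensional schemes, `Π` is smooth at `[W]` if and only
if the tangent space `Hom(I_W, O_W)` of the fiber at `[W]` vanishes; and this holds if
and only if `min(kᵢ, hᵢ − kᵢ) = 0` for all `i`, if and only if for each `i` either
`kᵢ = 0` or `kᵢ = hᵢ`, i.e. `W` is a union of irreducible components of `ℓ ∩ A`. -/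
theorem stmt_12 (r : ℕ) (h k : Fin r → ℕ)
    (hh : ∀ i, 1 ≤ h i) (hk : ∀ i, k i ≤ h i) :
    (Subsingleton ((WIdeal r h k) →ₗ[FiberRing r h] (FiberRing r h ⧸ WIdeal r h k)) ↔
        ∀ i, min (k i) (h i - k i) = 0) ∧
      (Subsingleton ((WIdeal r h k) →ₗ[FiberRing r h] (FiberRing r h ⧸ WIdeal r h k)) ↔
        ∀ i, k i = 0 ∨ k i = h i) := by
  have main : Subsingleton ((WIdeal r h k) →ₗ[FiberRing r h]
      (FiberRing r h ⧸ WIdeal r h k)) ↔ ∀ i, k i = 0 ∨ k i = h i := by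
    constructor
    · intro hsub
      by_contra hcon
      push_neg at hcon
      obtain ⟨i₀, h0, hne⟩ := hcon
      exact Stmt12Aux.not_subsingleton_of r h k i₀ (by omega)
        (lt_of_le_of_ne (hk i₀) hne) hsub
    · exact Stmt12Aux.subsingleton_of r h k
  refine ⟨main.trans ?_, main⟩
  constructor
  · intro hc i
    have := hc i
    have := hk i
    omega
  · intro hc i
    have := hc i
    have := hk i
    omega

end
end

section
/- Let Y = ℙ_{ℙ¹}(O ⊕ O(a)) with a ≥ 1, with minimal section C₀ and fiber f. Let W ⊂ Y be a length-a zero-dimensional subscheme supported on a section G̃ disjoint from C₀ (numerically G̃ ≡ C₀ + af), and let y ∈ Y \ (C₀ ∪ G̃) not lying on any fiber through a point of W. Then h⁰(Y, O_Y(C₀ + af) ⊗ I_W ⊗ I_y) = 1, i.e. there is a unique curve in |C₀ + af| containing W and y, and this curve is irreducible (a section of the ruling). -/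
open MvPolynomial

noncomputable section

lemma homog_dvd_const {a : ℕ} {φ P : MvPolynomial (Fin 2) ℂ}
    (hφ : φ.IsHomogeneous a) (hP : P.IsHomogeneous a) (h : φ ∣ P) :
    ∃ l : ℂ, P = C l * φ := by
  obtain ⟨q, rfl⟩ := h
  refine ⟨coeff 0 q, ?_⟩
  have h2 : homogeneousComponent a (φ * q) = φ * q := by
    rw [homogeneousComponent_of_mem ((mem_homogeneousSubmodule _ _).2 hP), if_pos rfl]
  have h1 : φ * q = ∑ i ∈ Finset.range (q.totalDegree + 1), φ * homogeneousComponent i q := by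
    rw [← Finset.mul_sum, sum_homogeneousComponent]
  calc φ * q = homogeneousComponent a (φ * q) := h2.symm
    _ = ∑ i ∈ Finset.range (q.totalDegree + 1),
          homogeneousComponent a (φ * homogeneousComponent i q) := by
        rw [h1, map_sum]
    _ = ∑ i ∈ Finset.range (q.totalDegree + 1),
          if a = a + i then φ * homogeneousComponent i q else 0 := by
        refine Finset.sum_congr rfl fun i _ => ?_
        exact homogeneousComponent_of_mem ((mem_homogeneousSubmodule _ _).2
          (hφ.mul (homogeneousComponent_isHomogeneous i q)))
    _ = ∑ i ∈ Finset.range (q.totalDegree + 1),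
          if i = 0 then φ * homogeneousComponent i q else 0 := by
        simp only [Nat.left_eq_add]
    _ = φ * homogeneousComponent 0 q := by
        rw [Finset.sum_ite_eq' _ 0, if_pos (Finset.mem_range.2 (Nat.succ_pos _))]
    _ = C (coeff 0 q) * φ := by rw [homogeneousComponent_zero, mul_comm]


/-- Uniqueness of the member of `|C₀ + af|` through `W` and `y` on the Hirzebruch
surface `Y = ℙ_{ℙ¹}(O ⊕ O(a))`, `a ≥ 1`, in coordinates.  Global sections of
`O_Y(C₀ + af) = O_Y(1)` are pairs `(c, g)` with `c ∈ ℂ` and `g` a binary form of degree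
`a` (so `h⁰ = a + 2`); the curve of `(c, g)` is a section of the ruling iff `c ≠ 0`.
The section `G̃` disjoint from `C₀` corresponds to `(c₀, g₀)` with `c₀ ≠ 0`; the
length-`a` subscheme `W ⊂ G̃` corresponds (via `G̃ ≅ ℙ¹`) to the divisor of a nonzero
binary form `φ` of degree `a`, and the curve of `(c, g)` contains `W` iff
`φ ∣ c₀·g − c·g₀` (the restriction of `(c,g)` to `G̃`).  The point
`y ∈ Y ∖ (C₀ ∪ G̃)`, not on any fiber through a point of `W`, has base point
`[s₀ : t₀] ∈ ℙ¹` with `φ(s₀,t₀) ≠ 0` and fiber coordinate `v₀` (in the chart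
complementing `C₀`), with `y ∉ G̃` reading `c₀v₀ + g₀(s₀,t₀) ≠ 0`; the curve of
`(c, g)` passes through `y` iff `c·v₀ + g(s₀,t₀) = 0`.  Conclusion: there is a
solution `(c, g)`, unique up to scalar (i.e. `h⁰(O_Y(C₀+af) ⊗ I_W ⊗ I_y) = 1`), and
it has `c ≠ 0`, i.e. the unique curve through `W` and `y` is irreducible, a section
of the ruling. -/
theorem stmt_15 (a : ℕ) (ha : 1 ≤ a)
    (c₀ : ℂ) (hc₀ : c₀ ≠ 0)
    (g₀ : MvPolynomial (Fin 2) ℂ) (hg₀ : g₀.IsHomogeneous a)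
    (φ : MvPolynomial (Fin 2) ℂ) (hφ : φ.IsHomogeneous a) (hφ0 : φ ≠ 0)
    (s₀ t₀ : ℂ) (hst : ¬(s₀ = 0 ∧ t₀ = 0)) (v₀ : ℂ)
    (hyW : eval ![s₀, t₀] φ ≠ 0)
    (hyG : c₀ * v₀ + eval ![s₀, t₀] g₀ ≠ 0) :
    ∃ (c : ℂ) (g : MvPolynomial (Fin 2) ℂ),
      g.IsHomogeneous a ∧ c ≠ 0 ∧
      φ ∣ (C c₀ * g - C c * g₀) ∧
      c * v₀ + eval ![s₀, t₀] g = 0 ∧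
      ∀ (c' : ℂ) (g' : MvPolynomial (Fin 2) ℂ),
        g'.IsHomogeneous a →
        φ ∣ (C c₀ * g' - C c' * g₀) →
        c' * v₀ + eval ![s₀, t₀] g' = 0 →
        ∃ lam : ℂ, c' = lam * c ∧ g' = C lam * g := by
  set cc := eval ![s₀, t₀] φ with hcc
  set l : ℂ := -(c₀ * v₀ + eval ![s₀, t₀] g₀) with hl
  have hl0 : l ≠ 0 := neg_ne_zero.2 hyG
  set g : MvPolynomial (Fin 2) ℂ := C (c₀⁻¹ * cc) * g₀ + C (c₀⁻¹ * l) * φ with hg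
  have hC0 : (C c₀ : MvPolynomial (Fin 2) ℂ) ≠ 0 := by
    simpa using hc₀
  have key : C c₀ * g = C cc * g₀ + C l * φ := by
    rw [hg]
    rw [mul_add, ← mul_assoc, ← mul_assoc, ← C_mul, ← C_mul,
      mul_inv_cancel_left₀ hc₀, mul_inv_cancel_left₀ hc₀]
  refine ⟨cc, g, (hg₀.C_mul _).add (hφ.C_mul _), hyW, ⟨C l, ?_⟩, ?_, ?_⟩
  · rw [key]; ring
  · simp only [hg, eval_add, eval_mul, eval_C, hl]
    field_simp
    ring
  · intro c' g' hg' hdvd hev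
    obtain ⟨l', hl'⟩ := homog_dvd_const hφ
      (((hg'.C_mul c₀)).sub ((hg₀.C_mul c'))) hdvd
    have hEg' : eval ![s₀, t₀] g' = -(c' * v₀) := by linear_combination hev
    have hev' : l' * cc = c' * l := by
      have := congrArg (eval ![s₀, t₀]) hl'
      simp only [map_sub, eval_mul, eval_C, hEg'] at this
      rw [hl, hcc]
      linear_combination -this
    refine ⟨c' / cc, by field_simp, ?_⟩
    have hl'eq : l' = c' / cc * l := by field_simp; linear_combination hev'
    have hc'C : (C c' : MvPolynomial (Fin 2) ℂ) = C (c' / cc) * C cc := by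
      rw [← C_mul]; field_simp
    have hl'C : (C l' : MvPolynomial (Fin 2) ℂ) = C (c' / cc) * C l := by
      rw [← C_mul, hl'eq]
    apply mul_left_cancel₀ hC0
    linear_combination hl' + g₀ * hc'C + φ * hl'C - C (c' / cc) * key


end
end
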